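/- In the Laurent polynomial ring ℤ[x₁^{±1}, x₂^{±1}], for any integers m ≥ 1 and n ≥ 1, the element w = x₁^{m-1} x₂^n + x₁^{m-2} x₂^n + ... + x₁ x₂^n + x₂^n - x₂^{n-1} - ... - x₂ - 1 is not divisible by v = x₂ + x₁ - 2. -/

import Mathlib

/-- The Laurent polynomial ring `ℤ[x₁^{±1}, x₂^{±1}]` in two variables,
realized as the group algebra of `ℤ²` over `ℤ`. -/
noncomputable def LaurentTwo : Type := AddMonoidAlgebra ℤ (Fin 2 →₀ ℤ)

noncomputable instance : CommRing LaurentTwo :=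
  inferInstanceAs (CommRing (AddMonoidAlgebra ℤ (Fin 2 →₀ ℤ)))

/-- The variable `xᵢ` of the Laurent polynomial ring (`i = 0` is `x₁`,
`i = 1` is `x₂`). -/
noncomputable def Lvar (i : Fin 2) : LaurentTwo :=
  AddMonoidAlgebra.single (Finsupp.single i 1) 1

/-- The monoid hom sending the monomial exponent `(a, b)` to `(-1)^a * 3^b` in `ℚ`. -/
def Fev : Multiplicative (Fin 2 →₀ ℤ) →* ℚ where
  toFun g := (-1 : ℚ) ^ ((Multiplicative.toAdd g) 0) * (3 : ℚ) ^ ((Multiplicative.toAdd g) 1)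
  map_one' := by simp
  map_mul' a b := by
    simp only [toAdd_mul, Finsupp.add_apply,
      zpow_add₀ (by norm_num : (-1:ℚ) ≠ 0), zpow_add₀ (by norm_num : (3:ℚ) ≠ 0)]
    ring

/-- Evaluation `x₁ ↦ -1`, `x₂ ↦ 3`. -/
noncomputable def φev : AddMonoidAlgebra ℤ (Fin 2 →₀ ℤ) →ₐ[ℤ] ℚ :=
  AddMonoidAlgebra.lift ℤ ℚ (Fin 2 →₀ ℤ) Fev

lemma φev_Lvar0 : φev (Lvar 0) = -1 := by
  simp [φev, Lvar, AddMonoidAlgebra.lift_single, Fev, Finsupp.single_apply]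

lemma φev_Lvar1 : φev (Lvar 1) = 3 := by
  simp [φev, Lvar, AddMonoidAlgebra.lift_single, Fev, Finsupp.single_apply]

/-- For `m ≥ 1`, `n ≥ 1`, the element
`w = x₁^{m-1} x₂^n + ... + x₁ x₂^n + x₂^n - x₂^{n-1} - ... - x₂ - 1`
is not divisible by `v = x₂ + x₁ - 2` in `ℤ[x₁^{±1}, x₂^{±1}]`. -/
theorem laurent_not_dvd (m n : ℕ) (hm : 1 ≤ m) (hn : 1 ≤ n) :
    ¬ (Lvar 1 + Lvar 0 - 2) ∣
      ((∑ k ∈ Finset.range m, (Lvar 0) ^ k) * (Lvar 1) ^ n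
        - ∑ k ∈ Finset.range n, (Lvar 1) ^ k) := by
  rintro ⟨z, hz⟩
  obtain ⟨ψ, hψ⟩ : ∃ ψ : LaurentTwo →+* ℚ, ∀ x, ψ x = φev x := ⟨φev.toRingHom, fun _ => rfl⟩
  have e0 : ψ (Lvar 0) = -1 := (hψ _).trans φev_Lvar0
  have e1 : ψ (Lvar 1) = 3 := (hψ _).trans φev_Lvar1
  have h := congrArg ψ hz
  simp only [map_sub, map_add, map_mul, map_pow, map_sum, map_ofNat,
    e0, e1] at h
  norm_num at h
  have h2 : (∑ k ∈ Finset.range n, (3:ℚ) ^ k) = (3 ^ n - 1) / 2 := by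
    rw [geom_sum_eq (by norm_num)]
    norm_num
  have h3 : (1:ℚ) < 3 ^ n := one_lt_pow₀ (by norm_num) (by omega)
  rcases Nat.even_or_odd m with he | ho
  · rw [if_pos he, h2] at h
    nlinarith
  · rw [if_neg (Nat.not_even_iff_odd.mpr ho), h2] at h
    nlinarith
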